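/- Hardy-type inequality with boundary term: for k > 0, 0 < r₁ < r₂ < ∞, and g ∈ C¹([r₁,r₂]), ∫_{r₁}^{r₂} |g(y)/y|² y dy ≤ C_k ( ∫_{r₁}^{r₂} |g'(y) + k g(y)/y|² y dy + |g(r₁)|² ) for a constant C_k depending only on k. -/

import Mathlib

open Real

/-- Hardy-type inequality with boundary term: for `k > 0` there is `C_k > 0`
(depending only on `k`) such that for all `0 < r₁ < r₂ < ∞` and `g ∈ C¹([r₁,r₂])`,
`∫_{r₁}^{r₂} |g(y)/y|² y dy ≤ C_k (∫_{r₁}^{r₂} |g'(y) + k g(y)/y|² y dy + |g(r₁)|²)`. -/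
theorem hardy_inequality_with_boundary (k : ℝ) (hk : 0 < k) :
    ∃ C : ℝ, 0 < C ∧ ∀ r₁ r₂ : ℝ, 0 < r₁ → r₁ < r₂ →
      ∀ g : ℝ → ℝ, ContDiffOn ℝ 1 g (Set.Icc r₁ r₂) →
        (∫ y in r₁..r₂, |g y / y| ^ 2 * y)
          ≤ C * ((∫ y in r₁..r₂, |deriv g y + k * g y / y| ^ 2 * y) + |g r₁| ^ 2) := by
  refine ⟨1 / k ^ 2 + 1 / k, by positivity, ?_⟩
  intro r₁ r₂ hr₁ hlt g hg
  have hle : r₁ ≤ r₂ := hlt.le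
  set φ := derivWithin g (Set.Icc r₁ r₂) with hφ
  have huniq : UniqueDiffOn ℝ (Set.Icc r₁ r₂) := uniqueDiffOn_Icc hlt
  have hgc : ContinuousOn g (Set.Icc r₁ r₂) := hg.continuousOn
  have hφc : ContinuousOn φ (Set.Icc r₁ r₂) :=
    hg.continuousOn_derivWithin huniq le_rfl
  have hpos : ∀ y ∈ Set.Icc r₁ r₂, 0 < y := fun y hy => lt_of_lt_of_le hr₁ hy.1
  have hder : ∀ y ∈ Set.Ioo r₁ r₂, HasDerivAt g (φ y) y := by
    intro y hy
    have h1 : Set.Icc r₁ r₂ ∈ nhds y := Icc_mem_nhds hy.1 hy.2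
    exact ((hg.differentiableOn one_ne_zero y
      (Set.Ioo_subset_Icc_self hy)).hasDerivWithinAt).hasDerivAt h1
  -- LHS rewrite
  have hLHS : (∫ y in r₁..r₂, |g y / y| ^ 2 * y) = ∫ y in r₁..r₂, (g y) ^ 2 / y := by
    apply intervalIntegral.integral_congr
    intro y hy
    rw [Set.uIcc_of_le hle] at hy
    have hy0 : y ≠ 0 := (hpos y hy).ne'
    show |g y / y| ^ 2 * y = g y ^ 2 / y
    rw [sq_abs]
    field_simp
  -- RHS rewrite
  have hRHS : (∫ y in r₁..r₂, |deriv g y + k * g y / y| ^ 2 * y)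
      = ∫ y in r₁..r₂, (φ y + k * g y / y) ^ 2 * y := by
    apply intervalIntegral.integral_congr_ae
    have h2 : ∀ᵐ (y : ℝ), y ≠ r₂ := by
      refine MeasureTheory.ae_iff.mpr ?_
      have : {y : ℝ | ¬ y ≠ r₂} = {r₂} := by ext y; simp
      rw [this]; exact Real.volume_singleton
    filter_upwards [h2] with y hy2 hy
    rw [Set.uIoc_of_le hle] at hy
    have hyo : y ∈ Set.Ioo r₁ r₂ := ⟨hy.1, lt_of_le_of_ne hy.2 hy2⟩
    rw [(hder y hyo).deriv, sq_abs]
  rw [hLHS, hRHS]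
  -- integrability
  have hintA : IntervalIntegrable (fun y => φ y ^ 2 * y) MeasureTheory.volume r₁ r₂ := by
    apply ContinuousOn.intervalIntegrable
    rw [Set.uIcc_of_le hle]
    exact (hφc.pow 2).mul continuousOn_id
  have hintB : IntervalIntegrable (fun y => 2 * g y * φ y) MeasureTheory.volume r₁ r₂ := by
    apply ContinuousOn.intervalIntegrable
    rw [Set.uIcc_of_le hle]
    exact ((continuousOn_const.mul hgc).mul hφc)
  have hintD : IntervalIntegrable (fun y => (g y) ^ 2 / y) MeasureTheory.volume r₁ r₂ := by
    apply ContinuousOn.intervalIntegrable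
    rw [Set.uIcc_of_le hle]
    exact (hgc.pow 2).div continuousOn_id fun y hy => (hpos y hy).ne'
  -- the expansion
  have hexp : (∫ y in r₁..r₂, (φ y + k * g y / y) ^ 2 * y)
      = (∫ y in r₁..r₂, φ y ^ 2 * y) + k * (∫ y in r₁..r₂, 2 * g y * φ y)
        + k ^ 2 * (∫ y in r₁..r₂, (g y) ^ 2 / y) := by
    have heq : (∫ y in r₁..r₂, (φ y + k * g y / y) ^ 2 * y)
        = ∫ y in r₁..r₂, (φ y ^ 2 * y + (k * (2 * g y * φ y) + k ^ 2 * ((g y) ^ 2 / y))) := by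
      apply intervalIntegral.integral_congr
      intro y hy
      rw [Set.uIcc_of_le hle] at hy
      have hy0 : y ≠ 0 := (hpos y hy).ne'
      field_simp
      ring
    rw [heq, intervalIntegral.integral_add hintA
      (((hintB.const_mul k)).add (hintD.const_mul (k ^ 2))),
      intervalIntegral.integral_add (hintB.const_mul k) (hintD.const_mul (k ^ 2)),
      intervalIntegral.integral_const_mul, intervalIntegral.integral_const_mul]
    ring
  -- FTC for the middle term
  have hFTC : (∫ y in r₁..r₂, 2 * g y * φ y) = g r₂ ^ 2 - g r₁ ^ 2 := by
    have := intervalIntegral.integral_eq_sub_of_hasDeriv_right_of_le hle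
      (f := fun y => g y ^ 2) (f' := fun y => 2 * g y * φ y)
      (hgc.pow 2)
      (fun y hy => by
        have h := (hder y hy).pow 2
        convert h.hasDerivWithinAt using 1
        · rfl
        · norm_num)
      hintB
    simpa using this
  -- nonnegativity facts
  have hA : 0 ≤ ∫ y in r₁..r₂, φ y ^ 2 * y := by
    apply intervalIntegral.integral_nonneg hle
    intro y hy
    exact mul_nonneg (sq_nonneg _) (hpos y hy).le
  have hI : 0 ≤ ∫ y in r₁..r₂, (φ y + k * g y / y) ^ 2 * y := by
    apply intervalIntegral.integral_nonneg hle
    intro y hy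
    exact mul_nonneg (sq_nonneg _) (hpos y hy).le
  set A := ∫ y in r₁..r₂, φ y ^ 2 * y
  set I := ∫ y in r₁..r₂, (φ y + k * g y / y) ^ 2 * y
  set D := ∫ y in r₁..r₂, (g y) ^ 2 / y
  have hk2 : I = A + k * (g r₂ ^ 2 - g r₁ ^ 2) + k ^ 2 * D := by
    rw [hexp, hFTC]
  have habs : |g r₁| ^ 2 = g r₁ ^ 2 := sq_abs _
  rw [habs]
  have hkey : k ^ 2 * D ≤ I + k * g r₁ ^ 2 := by nlinarith [sq_nonneg (g r₂)]
  have hk2pos : (0:ℝ) < k ^ 2 := by positivity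
  have h1 : D ≤ (I + k * g r₁ ^ 2) / k ^ 2 := (le_div_iff₀ hk2pos).mpr (by linarith)
  have h2 : (I + k * g r₁ ^ 2) / k ^ 2 ≤ (1 / k ^ 2 + 1 / k) * (I + g r₁ ^ 2) := by
    rw [div_le_iff₀ hk2pos]
    have h3 : (1 / k ^ 2 + 1 / k) * (I + g r₁ ^ 2) * k ^ 2 = (1 + k) * (I + g r₁ ^ 2) := by
      field_simp
    rw [h3]
    nlinarith [mul_nonneg hk.le hI, sq_nonneg (g r₁)]
  linarith
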